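/- arXiv:1504.05349 — 5 statements merged into one kernel-verified Lean document; each statement's English description precedes it below -/
import Mathlib

section
/- The minimum subspace distance of the h-folded subspace code FS[h; n_t, k] equals 2(n_t - ceil(k/h) + 1). In particular, any two distinct codewords (n_t-dimensional subspaces generated by distinct message polynomials f, g of q-degree less than k) have intersection of dimension at most ceil(k/h) - 1. -/
section Aux

variable {Fq Fqm : Type*} [Field Fq] [Fintype Fq] [Field Fqm] [Algebra Fq Fqm]

lemma fsAux_add_pow (q : ℕ) (hq : q = Fintype.card Fq) (x y : Fqm) (n : ℕ) :
    (x + y) ^ q ^ n = x ^ q ^ n + y ^ q ^ n := by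
  let p := ringChar Fq
  haveI : CharP Fq p := ringChar.charP Fq
  obtain ⟨s, hp, hcard⟩ := FiniteField.card Fq p
  haveI := Fact.mk hp
  haveI : CharP Fqm p := charP_of_injective_algebraMap (algebraMap Fq Fqm).injective p
  rw [hq, hcard, ← pow_mul, add_pow_char_pow]

lemma fsAux_smul_pow (q : ℕ) (hq : q = Fintype.card Fq) (c : Fq) (x : Fqm) (n : ℕ) :
    (c • x) ^ q ^ n = c • x ^ q ^ n := by
  rw [Algebra.smul_def, Algebra.smul_def, mul_pow, ← map_pow]
  rw [hq, FiniteField.pow_card_pow]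

/-- The linearized polynomial with coefficients `c` as an `Fq`-linear map. -/
noncomputable def linPoly (q : ℕ) (hq : q = Fintype.card Fq) {k : ℕ} (c : Fin k → Fqm) :
    Fqm →ₗ[Fq] Fqm where
  toFun x := ∑ l : Fin k, c l * x ^ q ^ (l : ℕ)
  map_add' x y := by
    simp_rw [fsAux_add_pow q hq, mul_add, Finset.sum_add_distrib]
  map_smul' a x := by
    simp only [RingHom.id_apply, Finset.smul_sum]
    refine Finset.sum_congr rfl fun l _ => ?_
    rw [fsAux_smul_pow q hq, Algebra.smul_def, Algebra.smul_def]
    ring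

lemma linPoly_apply (q : ℕ) (hq : q = Fintype.card Fq) {k : ℕ} (c : Fin k → Fqm) (x : Fqm) :
    linPoly q hq c x = ∑ l : Fin k, c l * x ^ q ^ (l : ℕ) := rfl

lemma finrank_ker_linPoly_le [Fintype Fqm] (q : ℕ) (hq : q = Fintype.card Fq)
    {k : ℕ} (c : Fin k → Fqm) (hc : c ≠ 0) :
    Module.finrank Fq (LinearMap.ker (linPoly q hq c)) ≤ k - 1 := by
  classical
  have hq2 : 1 < q := hq ▸ Fintype.one_lt_card
  set P : Polynomial Fqm := ∑ l : Fin k, Polynomial.C (c l) * Polynomial.X ^ q ^ (l : ℕ) with hP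
  obtain ⟨l0, hl0⟩ : ∃ l, c l ≠ 0 := by
    by_contra hcon; push_neg at hcon; exact hc (funext fun l => hcon l)
  have hcoeff : P.coeff (q ^ (l0 : ℕ)) = c l0 := by
    rw [hP, Polynomial.finset_sum_coeff, Finset.sum_eq_single l0]
    · simp
    · intro b _ hb
      have hne : q ^ (b : ℕ) ≠ q ^ (l0 : ℕ) := fun he =>
        hb (Fin.ext (Nat.pow_right_injective hq2 he))
      simp [Polynomial.coeff_X_pow, hne, Ne.symm hne]
    · simp
  have hPne : P ≠ 0 := fun h0 => hl0 (by rw [← hcoeff, h0, Polynomial.coeff_zero])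
  have hdeg : P.natDegree ≤ q ^ (k - 1) := by
    apply Polynomial.natDegree_sum_le_of_forall_le
    intro l _
    refine (Polynomial.natDegree_C_mul_le _ _).trans ?_
    refine (Polynomial.natDegree_X_pow_le _).trans ?_
    exact Nat.pow_le_pow_right (by omega) (by omega)
  haveI : Fintype (LinearMap.ker (linPoly q hq c)) := Fintype.ofFinite _
  have hroot : ∀ x : Fqm, x ∈ LinearMap.ker (linPoly q hq c) → x ∈ P.roots.toFinset := by
    intro x hx
    rw [Multiset.mem_toFinset, Polynomial.mem_roots hPne]
    have : P.eval x = linPoly q hq c x := by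
      rw [hP, Polynomial.eval_finset_sum, linPoly_apply]
      simp
    rw [Polynomial.IsRoot, this, LinearMap.mem_ker.mp hx]
  have hstep : Fintype.card (LinearMap.ker (linPoly q hq c)) ≤ P.roots.toFinset.card := by
    rw [← Fintype.card_coe]
    exact Fintype.card_le_of_injective
      (fun x => (⟨x.1, hroot x.1 x.2⟩ : {y // y ∈ P.roots.toFinset}))
      (fun a b hab => Subtype.ext (by simpa using congrArg Subtype.val hab))
  have hcard1 : Fintype.card (LinearMap.ker (linPoly q hq c)) ≤ q ^ (k - 1) :=
    hstep.trans (((Multiset.toFinset_card_le _).trans (Polynomial.card_roots' P)).trans hdeg)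
  have hcard2 := Module.card_eq_pow_finrank (K := Fq) (V := LinearMap.ker (linPoly q hq c))
  rw [← hq] at hcard2
  rw [hcard2] at hcard1
  exact (Nat.pow_le_pow_iff_right hq2).mp hcard1

end Aux


/-- The subspace distance `d_S(U,V) = dim U + dim V - 2 dim (U ⊓ V)`. -/
noncomputable def sDist {Fq V : Type*} [Field Fq] [AddCommGroup V] [Module Fq V]
    (U W : Submodule Fq V) : ℕ :=
  Module.finrank Fq U + Module.finrank Fq W -
    2 * Module.finrank Fq (U ⊓ W : Submodule Fq V)

/-- The codeword of the `h`-folded subspace code `FS[h; nt, k]` associated to a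
linearized message polynomial `f` (given by its coefficients): the `F_q`-row
space of the `nt` vectors `(α^{jh}, f(α^{jh}), f(α^{jh+1}), …, f(α^{(j+1)h-1}))`. -/
noncomputable def fsCodeword {Fq Fqm : Type*} [Field Fq] [Field Fqm] [Algebra Fq Fqm]
    (q h nt k : ℕ) (α : Fqm) (f : Fin k → Fqm) :
    Submodule Fq (Fin (h + 1) → Fqm) :=
  Submodule.span Fq (Set.range fun j : Fin nt =>
    Fin.cons (α ^ ((j : ℕ) * h))
      (fun i : Fin h => ∑ l : Fin k, f l * (α ^ ((j : ℕ) * h + (i : ℕ))) ^ q ^ (l : ℕ)))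

/-- The minimum subspace distance of the `h`-folded subspace code `FS[h; nt, k]`
is `2(nt - ⌈k/h⌉ + 1)`; in particular any two distinct codewords have
intersection of dimension at most `⌈k/h⌉ - 1`. -/
theorem fs_code_min_distance {Fq Fqm : Type*} [Field Fq] [Fintype Fq]
    [Field Fqm] [Fintype Fqm] [Algebra Fq Fqm]
    (q m : ℕ) (hq : q = Fintype.card Fq) (hm : Module.finrank Fq Fqm = m)
    (h nt k : ℕ) (hh : 1 ≤ h) (hnt : 1 ≤ nt) (hk : 1 ≤ k) (hkm : k ≤ h * nt)
    (hhn : h * nt ≤ m)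
    (α : Fqm) (hα : LinearIndependent Fq fun i : Fin m => α ^ (i : ℕ)) :
    (∀ f g : Fin k → Fqm, f ≠ g →
      Module.finrank Fq
          (fsCodeword q h nt k α f ⊓ fsCodeword q h nt k α g :
            Submodule Fq (Fin (h + 1) → Fqm)) ≤ (k + h - 1) / h - 1) ∧
    (∀ f g : Fin k → Fqm, f ≠ g →
      2 * (nt - (k + h - 1) / h + 1) ≤
        sDist (Fq := Fq) (fsCodeword q h nt k α f) (fsCodeword q h nt k α g)) ∧
    (∃ f g : Fin k → Fqm, f ≠ g ∧
      sDist (Fq := Fq) (fsCodeword q h nt k α f) (fsCodeword q h nt k α g) =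
        2 * (nt - (k + h - 1) / h + 1)) := by
  classical
  have hq2 : 1 < q := hq ▸ Fintype.one_lt_card
  have hh0 : 0 < h := hh
  haveI : Module.Finite Fq Fqm := Module.Finite.of_finite
  set v : (Fin k → Fqm) → Fin nt → (Fin (h + 1) → Fqm) := fun f j =>
    Fin.cons (α ^ ((j : ℕ) * h))
      (fun i : Fin h => ∑ l : Fin k, f l * (α ^ ((j : ℕ) * h + (i : ℕ))) ^ q ^ (l : ℕ)) with hv
  have hcode : ∀ f, fsCodeword q h nt k α f = Submodule.span Fq (Set.range (v f)) :=
    fun f => rfl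
  -- linear independence of families of powers of α
  have hli : ∀ {ι : Type} [Fintype ι] (t : ι → ℕ), Function.Injective t → (∀ i, t i < m) →
      LinearIndependent Fq fun i : ι => α ^ t i := by
    intro ι _ t hinj hlt
    have h2 := hα.comp (fun i => (⟨t i, hlt i⟩ : Fin m))
      (fun a b hab => hinj (by simpa using hab))
    exact h2
  have h0li : LinearIndependent Fq fun j : Fin nt => α ^ ((j : ℕ) * h) := by
    apply hli (fun j : Fin nt => (j : ℕ) * h)
    · intro a b hab
      exact Fin.ext (Nat.eq_of_mul_eq_mul_right hh0 hab)
    · intro j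
      have hj := j.2
      calc (j : ℕ) * h < nt * h := (Nat.mul_lt_mul_right hh0).mpr j.2
        _ = h * nt := Nat.mul_comm _ _
        _ ≤ m := hhn
  have hpair : ∀ p : Fin nt × Fin h, ((p.1 : ℕ) * h + (p.2 : ℕ)) % h = (p.2 : ℕ) ∧
      ((p.1 : ℕ) * h + (p.2 : ℕ)) / h = (p.1 : ℕ) := by
    intro p
    constructor
    · rw [Nat.add_comm, Nat.add_mul_mod_self_right]; exact Nat.mod_eq_of_lt p.2.2
    · rw [Nat.add_comm, Nat.add_mul_div_right _ _ hh0, Nat.div_eq_of_lt p.2.2, Nat.zero_add]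
  have hpli : LinearIndependent Fq fun p : Fin nt × Fin h => α ^ ((p.1 : ℕ) * h + (p.2 : ℕ)) := by
    apply hli
    · intro a b hab
      have hab' : ((a.1 : ℕ) * h + (a.2 : ℕ)) = ((b.1 : ℕ) * h + (b.2 : ℕ)) := hab
      refine Prod.ext (Fin.ext ?_) (Fin.ext ?_)
      · rw [← (hpair a).2, ← (hpair b).2, hab']
      · rw [← (hpair a).1, ← (hpair b).1, hab']
    · intro p
      have hp2 := p.2.2
      have hp1 := p.1.2
      have hlt : (p.1 : ℕ) * h + (p.2 : ℕ) < nt * h := by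
        calc (p.1 : ℕ) * h + (p.2 : ℕ) < (p.1 : ℕ) * h + h := by omega
          _ = ((p.1 : ℕ) + 1) * h := by ring
          _ ≤ nt * h := Nat.mul_le_mul_right h (by omega)
      exact lt_of_lt_of_le hlt (by rw [Nat.mul_comm]; exact hhn)
  have hvli : ∀ f, LinearIndependent Fq (v f) := by
    intro f
    apply LinearIndependent.of_comp
      (LinearMap.proj (0 : Fin (h + 1)) : (Fin (h + 1) → Fqm) →ₗ[Fq] Fqm)
    have he : (⇑(LinearMap.proj (0 : Fin (h + 1)) : (Fin (h + 1) → Fqm) →ₗ[Fq] Fqm) ∘ v f)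
        = fun j : Fin nt => α ^ ((j : ℕ) * h) := by
      funext j; simp [hv]
    rw [he]
    exact h0li
  have hrank : ∀ f : Fin k → Fqm, Module.finrank Fq
      (fsCodeword q h nt k α f : Submodule Fq (Fin (h + 1) → Fqm)) = nt := by
    intro f
    rw [hcode f]
    rw [finrank_span_eq_card (hvli f), Fintype.card_fin]
  -- the key dimension bound on intersections
  have key : ∀ f g : Fin k → Fqm, f ≠ g →
      Module.finrank Fq (fsCodeword q h nt k α f ⊓ fsCodeword q h nt k α g :
        Submodule Fq (Fin (h + 1) → Fqm)) * h ≤ k - 1 := by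
    intro f g hfg
    set F : Fqm →ₗ[Fq] Fqm := linPoly q hq (f - g) with hF
    set S : (Fin nt → Fq) →ₗ[Fq] (Fin (h + 1) → Fqm) :=
      { toFun := fun a => ∑ j : Fin nt, a j • v f j
        map_add' := fun a b => by simp [add_smul, Finset.sum_add_distrib]
        map_smul' := fun r a => by simp [smul_smul, Finset.smul_sum] } with hS
    have hSrange : LinearMap.range S = fsCodeword q h nt k α f := by
      ext x
      rw [LinearMap.mem_range, hcode, Submodule.mem_span_range_iff_exists_fun]
      constructor
      · rintro ⟨a, rfl⟩; exact ⟨a, rfl⟩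
      · rintro ⟨a, ha⟩; exact ⟨a, ha⟩
    set I : Submodule Fq (Fin (h + 1) → Fqm) := fsCodeword q h nt k α f ⊓ fsCodeword q h nt k α g with hI
    set A : Submodule Fq (Fin nt → Fq) := Submodule.comap S I with hA
    have hmap : Submodule.map S A = I :=
      Submodule.map_comap_eq_of_le (by rw [hSrange]; exact inf_le_left)
    have hIA : Module.finrank Fq I ≤ Module.finrank Fq A := by
      rw [← hmap]; exact Submodule.finrank_map_le S A
    have hmem : ∀ a : Fin nt → Fq, a ∈ A → ∀ i : Fin h,
        F (∑ j : Fin nt, a j • α ^ ((j : ℕ) * h + (i : ℕ))) = 0 := by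
      intro a ha i
      have haI : S a ∈ I := ha
      have hag : S a ∈ fsCodeword q h nt k α g := haI.2
      rw [hcode, Submodule.mem_span_range_iff_exists_fun] at hag
      obtain ⟨b, hb⟩ := hag
      have hb0 : ∑ j : Fin nt, b j • α ^ ((j : ℕ) * h) =
          ∑ j : Fin nt, a j • α ^ ((j : ℕ) * h) := by
        have h2 := congrFun hb (0 : Fin (h + 1))
        simpa [hS, hv, Finset.sum_apply] using h2
      have hba : b = a := by
        funext j
        have hzero : ∑ j : Fin nt, (b j - a j) • α ^ ((j : ℕ) * h) = 0 := by
          simp [sub_smul, Finset.sum_sub_distrib, hb0]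
        have h3 := Fintype.linearIndependent_iff.mp h0li (fun j => b j - a j) hzero j
        exact sub_eq_zero.mp h3
      have hsucc : ∑ j : Fin nt, a j •
            (∑ l : Fin k, g l * (α ^ ((j : ℕ) * h + (i : ℕ))) ^ q ^ (l : ℕ)) =
          ∑ j : Fin nt, a j •
            (∑ l : Fin k, f l * (α ^ ((j : ℕ) * h + (i : ℕ))) ^ q ^ (l : ℕ)) := by
        have h2 := congrFun hb i.succ
        rw [hba] at h2
        simpa [hS, hv, Finset.sum_apply] using h2
      have hFval : ∀ j : Fin nt, F (α ^ ((j : ℕ) * h + (i : ℕ))) =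
          (∑ l : Fin k, f l * (α ^ ((j : ℕ) * h + (i : ℕ))) ^ q ^ (l : ℕ)) -
          (∑ l : Fin k, g l * (α ^ ((j : ℕ) * h + (i : ℕ))) ^ q ^ (l : ℕ)) := by
        intro j
        rw [hF, linPoly_apply, ← Finset.sum_sub_distrib]
        exact Finset.sum_congr rfl fun l _ => by rw [Pi.sub_apply, sub_mul]
      have hFsum : ∑ j : Fin nt, a j • F (α ^ ((j : ℕ) * h + (i : ℕ))) = 0 := by
        simp only [hFval, smul_sub, Finset.sum_sub_distrib, hsucc, sub_self]
      calc F (∑ j : Fin nt, a j • α ^ ((j : ℕ) * h + (i : ℕ)))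
          = ∑ j : Fin nt, a j • F (α ^ ((j : ℕ) * h + (i : ℕ))) := by
            rw [map_sum]
            exact Finset.sum_congr rfl fun j _ => by rw [map_smul]
        _ = 0 := hFsum
    set Ψ : (Fin h → A) →ₗ[Fq] Fqm :=
      { toFun := fun cc => ∑ i : Fin h, ∑ j : Fin nt,
          ((cc i : Fin nt → Fq) j) • α ^ ((j : ℕ) * h + (i : ℕ))
        map_add' := fun x y => by
          simp [add_smul, Finset.sum_add_distrib]
        map_smul' := fun r x => by
          simp [mul_smul, Finset.smul_sum] } with hΨ
    have hΨker : ∀ cc, Ψ cc ∈ LinearMap.ker F := by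
      intro cc
      rw [LinearMap.mem_ker]
      show F (∑ i : Fin h, ∑ j : Fin nt,
          ((cc i : Fin nt → Fq) j) • α ^ ((j : ℕ) * h + (i : ℕ))) = 0
      rw [map_sum]
      exact Finset.sum_eq_zero fun i _ => hmem (cc i) (cc i).2 i
    have hΨinj : Function.Injective Ψ := by
      rw [← LinearMap.ker_eq_bot, LinearMap.ker_eq_bot']
      intro cc hcc
      have hcc0 : ∑ i : Fin h, ∑ j : Fin nt,
          ((cc i : Fin nt → Fq) j) • α ^ ((j : ℕ) * h + (i : ℕ)) = 0 := hcc
      have hcc2 : ∑ p : Fin nt × Fin h,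
          ((cc p.2 : Fin nt → Fq) p.1) • α ^ ((p.1 : ℕ) * h + (p.2 : ℕ)) = 0 := by
        rw [Fintype.sum_prod_type, Finset.sum_comm]
        exact hcc0
      have hall := Fintype.linearIndependent_iff.mp hpli
        (fun p => (cc p.2 : Fin nt → Fq) p.1) hcc2
      funext i
      apply Subtype.ext
      funext j
      simpa using hall (j, i)
    have hcomp : Module.finrank Fq (Fin h → A) ≤
        Module.finrank Fq (LinearMap.ker F) := by
      apply LinearMap.finrank_le_finrank_of_injective
        (f := Ψ.codRestrict (LinearMap.ker F) hΨker)
      intro x y hxy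
      exact hΨinj (by simpa using congrArg Subtype.val hxy)
    have hpi : Module.finrank Fq (Fin h → A) = h * Module.finrank Fq A := by
      rw [Module.finrank_pi_fintype, Finset.sum_const, Finset.card_univ, Fintype.card_fin,
        smul_eq_mul]
    have hker := finrank_ker_linPoly_le q hq (f - g) (sub_ne_zero.mpr hfg)
    calc Module.finrank Fq I * h ≤ Module.finrank Fq A * h := Nat.mul_le_mul_right h hIA
      _ = h * Module.finrank Fq A := Nat.mul_comm _ _
      _ = Module.finrank Fq (Fin h → A) := hpi.symm
      _ ≤ Module.finrank Fq (LinearMap.ker F) := hcomp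
      _ ≤ k - 1 := hker
  -- arithmetic facts
  have e1 : (k + h - 1) / h = (k - 1) / h + 1 := by
    rw [show k + h - 1 = (k - 1) + h by omega, Nat.add_div_right _ hh0]
  have e2 : (k - 1) / h + 1 ≤ nt := by
    have h3 : (k - 1) / h < nt := by
      rw [Nat.div_lt_iff_lt_mul hh0]
      have h4 : nt * h = h * nt := Nat.mul_comm _ _
      omega
    omega
  have part1 : ∀ f g : Fin k → Fqm, f ≠ g →
      Module.finrank Fq
          (fsCodeword q h nt k α f ⊓ fsCodeword q h nt k α g :
            Submodule Fq (Fin (h + 1) → Fqm)) ≤ (k + h - 1) / h - 1 := by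
    intro f g hfg
    rw [e1, Nat.add_sub_cancel, Nat.le_div_iff_mul_le hh0]
    exact key f g hfg
  refine ⟨part1, ?_, ?_⟩
  · intro f g hfg
    have hd := part1 f g hfg
    rw [e1] at hd
    have hdle : Module.finrank Fq
        (fsCodeword q h nt k α f ⊓ fsCodeword q h nt k α g :
          Submodule Fq (Fin (h + 1) → Fqm)) ≤ nt := by
      exact le_trans
        (Submodule.finrank_mono (s := fsCodeword q h nt k α f ⊓ fsCodeword q h nt k α g)
          (t := fsCodeword q h nt k α f) inf_le_left)
        (le_of_eq (hrank f))
    unfold sDist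
    rw [hrank f, hrank g, e1]
    generalize hDD : Module.finrank Fq
        (fsCodeword q h nt k α f ⊓ fsCodeword q h nt k α g :
          Submodule Fq (Fin (h + 1) → Fqm)) = D at hd hdle ⊢
    generalize hEE : (k - 1) / h = E at e2 hd ⊢
    omega
  · set d0 := (k - 1) / h with hd0
    have hd0h : d0 * h ≤ k - 1 := Nat.div_mul_le_self _ _
    have hd0nt : d0 < nt := by omega
    obtain ⟨f, hf0, hfval⟩ : ∃ f : Fin k → Fqm, f ≠ 0 ∧
        ∀ t : ℕ, t < d0 * h → ∑ l : Fin k, f l * (α ^ t) ^ q ^ (l : ℕ) = 0 := by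
      set L : (Fin k → Fqm) →ₗ[Fqm] (Fin (d0 * h) → Fqm) :=
        { toFun := fun f t => ∑ l : Fin k, f l * (α ^ (t : ℕ)) ^ q ^ (l : ℕ)
          map_add' := fun x y => by funext t; simp [add_mul, Finset.sum_add_distrib]
          map_smul' := fun r x => by funext t; simp [Finset.mul_sum, mul_assoc] } with hL
      have hnotinj : ¬ Function.Injective L := by
        intro hinj
        have hle := LinearMap.finrank_le_finrank_of_injective hinj
        rw [Module.finrank_pi, Module.finrank_pi, Fintype.card_fin, Fintype.card_fin] at hle
        omega
      rw [← LinearMap.ker_eq_bot] at hnotinj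
      obtain ⟨f, hfker, hfne⟩ := (Submodule.ne_bot_iff _).mp hnotinj
      refine ⟨f, hfne, fun t ht => ?_⟩
      have h5 := congrFun (LinearMap.mem_ker.mp hfker) (⟨t, ht⟩ : Fin (d0 * h))
      simpa [hL] using h5
    refine ⟨f, 0, hf0, ?_⟩
    have hub : Module.finrank Fq
        (fsCodeword q h nt k α f ⊓ fsCodeword q h nt k α 0 :
          Submodule Fq (Fin (h + 1) → Fqm)) ≤ d0 := by
      rw [hd0, Nat.le_div_iff_mul_le hh0]
      exact key f 0 hf0
    have hveq : ∀ j : Fin d0, v f (Fin.castLE hd0nt.le j) = v 0 (Fin.castLE hd0nt.le j) := by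
      intro j
      funext i
      refine Fin.cases ?_ ?_ i
      · simp [hv]
      · intro i2
        have hlt : ((Fin.castLE hd0nt.le j : Fin nt) : ℕ) * h + (i2 : ℕ) < d0 * h := by
          have hj : ((Fin.castLE hd0nt.le j : Fin nt) : ℕ) = (j : ℕ) := rfl
          rw [hj]
          have h6 : (j : ℕ) * h + (i2 : ℕ) < ((j : ℕ) + 1) * h := by
            have := i2.2; rw [Nat.add_mul, Nat.one_mul]; omega
          have h7 : ((j : ℕ) + 1) * h ≤ d0 * h := Nat.mul_le_mul_right h j.2
          omega
        have h1 := hfval _ hlt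
        simp only [hv, Fin.cons_succ]
        rw [h1]
        simp
    have hsub : Submodule.span Fq
        (Set.range fun j : Fin d0 => v (0 : Fin k → Fqm) (Fin.castLE hd0nt.le j)) ≤
        fsCodeword q h nt k α f ⊓ fsCodeword q h nt k α 0 := by
      rw [Submodule.span_le]
      rintro x ⟨j, rfl⟩
      have hm1 : v f (Fin.castLE hd0nt.le j) ∈
          (fsCodeword q h nt k α f : Submodule Fq (Fin (h + 1) → Fqm)) := by
        rw [hcode]
        exact Submodule.subset_span ⟨Fin.castLE hd0nt.le j, rfl⟩
      have hm2 : v (0 : Fin k → Fqm) (Fin.castLE hd0nt.le j) ∈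
          (fsCodeword q h nt k α 0 : Submodule Fq (Fin (h + 1) → Fqm)) := by
        rw [hcode]
        exact Submodule.subset_span ⟨Fin.castLE hd0nt.le j, rfl⟩
      rw [hveq j] at hm1
      exact Submodule.mem_inf.mpr ⟨hm1, hm2⟩
    have hlb : d0 ≤ Module.finrank Fq
        (fsCodeword q h nt k α f ⊓ fsCodeword q h nt k α 0 :
          Submodule Fq (Fin (h + 1) → Fqm)) := by
      have hli2 : LinearIndependent Fq
          (fun j : Fin d0 => v (0 : Fin k → Fqm) (Fin.castLE hd0nt.le j)) :=
        (hvli 0).comp _ (Fin.castLE_injective _)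
      have h8 := Submodule.finrank_mono hsub
      rwa [finrank_span_eq_card hli2, Fintype.card_fin] at h8
    have hIeq : Module.finrank Fq
        (fsCodeword q h nt k α f ⊓ fsCodeword q h nt k α 0 :
          Submodule Fq (Fin (h + 1) → Fqm)) = d0 := le_antisymm hub hlb
    unfold sDist
    rw [hrank f, hrank 0, hIeq, e1]
    omega
end

section
/- If the number of insertions γ and deletions δ satisfy γ + sδ < s(n_t - (k-1)/(h-s+1)), and D = ceil((n_r(h-s+1) + s(k-1) + 1)/(s+1)) with n_r = n_t + γ - δ, then D ≤ (n_t - δ)(h-s+1); consequently the linearized polynomial P(x) = Q(x, f(x), f(αx), ..., f(α^{s-1}x)), which has q-degree less than D and vanishes on (n_t - δ)(h-s+1) F_q-linearly independent points, is identically zero. -/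
/-- If the insertions `γ` and deletions `δ` satisfy
`γ + sδ < s(nt - (k-1)/(h-s+1))` and `D = ⌈(nr(h-s+1)+s(k-1)+1)/(s+1)⌉` with
`nr = nt + γ - δ`, then `D ≤ (nt - δ)(h-s+1)`; consequently any linearized
polynomial of `q`-degree less than `D` vanishing on `(nt - δ)(h-s+1)`
`F_q`-linearly independent points (such as `P(x) = Q(x, f(x), …, f(α^{s-1}x))`)
is identically zero. -/
theorem decoding_radius_implies_root {Fq Fqm : Type*}
    [Field Fq] [Fintype Fq] [Field Fqm] [Fintype Fqm] [Algebra Fq Fqm]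
    (q : ℕ) (hq : q = Fintype.card Fq)
    (nt h s k D γ δ nr : ℕ) (hs : 1 ≤ s) (hsh : s ≤ h) (hk : 1 ≤ k)
    (hδ : δ ≤ nt) (hnr : nr + δ = nt + γ)
    (hrad : (γ : ℚ) + s * δ < s * ((nt : ℚ) - ((k : ℚ) - 1) / ((h : ℚ) - s + 1)))
    (hD : D = (nr * (h - s + 1) + s * (k - 1) + 1 + s) / (s + 1)) :
    D ≤ (nt - δ) * (h - s + 1) ∧
    ∀ (c : Fin D → Fqm) (a : Fin ((nt - δ) * (h - s + 1)) → Fqm),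
      LinearIndependent Fq a →
      (∀ j, ∑ i : Fin D, c i * a j ^ q ^ (i : ℕ) = 0) →
      ∀ i, c i = 0 := by
  -- abbreviations
  set H : ℕ := h - s + 1 with hH
  set N : ℕ := (nt - δ) * H with hN
  -- cast facts
  have hHq : ((H : ℚ)) = (h : ℚ) - s + 1 := by
    rw [hH]; push_cast [Nat.cast_sub hsh]; ring
  have hHpos : (0 : ℚ) < (h : ℚ) - s + 1 := by
    have : (s : ℚ) ≤ h := by exact_mod_cast hsh
    linarith
  -- key arithmetic inequality
  have key : γ * H + s * (k - 1) + 1 ≤ s * ((nt - δ) * H) := by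
    have h1 : (s : ℚ) * ((k : ℚ) - 1) < ((s : ℚ) * nt - (γ + s * δ)) * ((h : ℚ) - s + 1) := by
      rw [← sub_pos] at hrad ⊢
      have hd : (s : ℚ) * ((nt : ℚ) - ((k : ℚ) - 1) / ((h : ℚ) - s + 1)) - ((γ : ℚ) + s * δ)
          = (((s : ℚ) * nt - (γ + s * δ)) * ((h : ℚ) - s + 1) - s * ((k : ℚ) - 1))
            / ((h : ℚ) - s + 1) := by
        field_simp
        ring
      rw [hd] at hrad
      exact (div_pos_iff.mp hrad).resolve_right (fun hcon => absurd hHpos (not_lt.mpr (le_of_lt hcon.2))) |>.1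
    have h2 : γ * H + s * (k - 1) < s * ((nt - δ) * H) := by
      have hc : ((γ * H + s * (k - 1) : ℕ) : ℚ) < ((s * ((nt - δ) * H) : ℕ) : ℚ) := by
        push_cast [Nat.cast_sub hδ, Nat.cast_sub hk, hHq]
        nlinarith
      exact_mod_cast hc
    exact Nat.succ_le_of_lt h2
  -- first part
  have hnr' : nr = (nt - δ) + γ := by omega
  have hDN : D ≤ N := by
    rw [hD, hN]
    rw [Nat.div_le_iff_le_mul_add_pred (by omega : 0 < s + 1)]
    have : nr * H = (nt - δ) * H + γ * H := by rw [hnr']; ring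
    simp only [Nat.add_sub_cancel]
    nlinarith [key]
  refine ⟨hDN, ?_⟩
  -- second part
  intro c a hli hroot
  by_contra hc
  push_neg at hc
  obtain ⟨i0, hi0⟩ := hc
  -- q ≥ 2
  have hq2 : 2 ≤ q := by
    rw [hq]; exact Fintype.one_lt_card
  -- characteristic setup
  obtain ⟨p, hp⟩ := CharP.exists Fq
  haveI hpfact : Fact p.Prime := ⟨(CharP.char_is_prime Fq p)⟩
  obtain ⟨m, hm⟩ := FiniteField.card Fq p
  haveI : CharP Fqm p := charP_of_injective_algebraMap (algebraMap Fq Fqm).injective p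
  have hqp : q = p ^ (m : ℕ) := by rw [hq, hm.2]
  -- the set of roots of the linearized polynomial contains the span
  set S : Set Fqm := {x | ∑ i : Fin D, c i * x ^ q ^ (i : ℕ) = 0} with hS
  have hspan : (Submodule.span Fq (Set.range a) : Set Fqm) ⊆ S := by
    intro x hx
    induction hx using Submodule.span_induction with
    | mem x hxr =>
        obtain ⟨j, rfl⟩ := hxr
        exact hroot j
    | zero =>
        simp only [hS, Set.mem_setOf_eq]
        have : ∀ i : Fin D, c i * (0 : Fqm) ^ q ^ (i : ℕ) = 0 := by
          intro i
          rw [zero_pow (by positivity), mul_zero]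
        simp [this]
    | add x y hxm hym hxs hys =>
        simp only [hS, Set.mem_setOf_eq] at hxs hys ⊢
        have : ∀ i : Fin D, c i * (x + y) ^ q ^ (i : ℕ)
            = c i * x ^ q ^ (i : ℕ) + c i * y ^ q ^ (i : ℕ) := by
          intro i
          simp only [hqp, ← pow_mul, add_pow_char_pow, mul_add]
        rw [Finset.sum_congr rfl (fun i _ => this i), Finset.sum_add_distrib, hxs, hys, add_zero]
    | smul r x hxm hxs =>
        simp only [hS, Set.mem_setOf_eq] at hxs ⊢
        have : ∀ i : Fin D, c i * (r • x) ^ q ^ (i : ℕ)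
            = algebraMap Fq Fqm r * (c i * x ^ q ^ (i : ℕ)) := by
          intro i
          rw [Algebra.smul_def, mul_pow, ← map_pow]
          rw [hq, FiniteField.pow_card_pow]
          ring
        rw [Finset.sum_congr rfl (fun i _ => this i), ← Finset.mul_sum, hxs, mul_zero]
  -- the linearized polynomial
  set P : Polynomial Fqm := ∑ i : Fin D, Polynomial.C (c i) * Polynomial.X ^ q ^ (i : ℕ)
    with hPdef
  have hpowinj : Function.Injective (fun i : ℕ => q ^ i) :=
    fun a b hab => Nat.pow_right_injective hq2 hab
  have hPcoeff : P.coeff (q ^ (i0 : ℕ)) = c i0 := by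
    rw [hPdef, Polynomial.finset_sum_coeff]
    rw [Finset.sum_eq_single i0]
    · simp
    · intro b _ hb
      rw [Polynomial.coeff_C_mul, Polynomial.coeff_X_pow, if_neg, mul_zero]
      exact fun hcon => hb (Fin.ext (Nat.pow_right_injective hq2 hcon)).symm
    · intro hcon; exact absurd (Finset.mem_univ i0) hcon
  have hPne : P ≠ 0 := fun hcon => hi0 (by rw [← hPcoeff, hcon, Polynomial.coeff_zero])
  have hPeval : ∀ x ∈ S, P.eval x = 0 := by
    intro x hx
    rw [hPdef, Polynomial.eval_finset_sum]
    simpa [hS] using hx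
  -- degree bound
  have hD1 : 1 ≤ D := i0.pos
  have hPdeg : P.natDegree ≤ q ^ (D - 1) := by
    rw [hPdef]
    apply Polynomial.natDegree_sum_le_of_forall_le
    intro i _
    calc (Polynomial.C (c i) * Polynomial.X ^ q ^ (i : ℕ)).natDegree
        ≤ q ^ (i : ℕ) := Polynomial.natDegree_C_mul_X_pow_le _ _
      _ ≤ q ^ (D - 1) := Nat.pow_le_pow_right (by omega) (by omega)
  -- count roots
  classical
  set t : Finset Fqm := (Submodule.span Fq (Set.range a) : Set Fqm).toFinset with ht
  have htcard : t.card = q ^ N := by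
    rw [ht, Set.toFinset_card]
    have h1 : Fintype.card (Submodule.span Fq (Set.range a) : Set Fqm)
        = (Fintype.card Fq) ^ Module.finrank Fq (Submodule.span Fq (Set.range a)) :=
      Module.card_eq_pow_finrank
    rw [h1, finrank_span_eq_card hli, ← hq]
    simp
  have hsub : t ⊆ P.roots.toFinset := by
    intro x hxt
    rw [Multiset.mem_toFinset, Polynomial.mem_roots hPne]
    rw [ht, Set.mem_toFinset] at hxt
    exact hPeval x (hspan hxt)
  have hcount : q ^ N ≤ q ^ (D - 1) := by
    calc q ^ N = t.card := htcard.symm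
      _ ≤ P.roots.toFinset.card := Finset.card_le_card hsub
      _ ≤ Multiset.card P.roots := P.roots.toFinset_card_le
      _ ≤ P.natDegree := P.card_roots' 
      _ ≤ q ^ (D - 1) := hPdeg
  have : N ≤ D - 1 := by
    exact le_of_not_gt fun hcon =>
      absurd hcount (not_le.mpr (Nat.pow_lt_pow_right (by omega) hcon))
  omega
end

section
/- The number of n_t-dimensional subspaces of F_q^N at subspace distance exactly t from a fixed n_r-dimensional subspace V is q^{u(t-u)} · [n_r choose u]_q · [N - n_r choose t-u]_q when u = (n_r - n_t + t)/2 is a nonnegative integer, and 0 when n_r - n_t + t is odd. -/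
/-- The Gaussian binomial coefficient `[n choose k]_q`, via the `q`-Pascal rule. -/
def gaussBinom (q : ℕ) : ℕ → ℕ → ℕ
  | _, 0 => 1
  | 0, _ + 1 => 0
  | n + 1, k + 1 => gaussBinom q n k + q ^ (k + 1) * gaussBinom q n (k + 1)

/-- Gaussian binomial coefficient with integer lower index (zero when negative). -/
def gaussBinomZ (q n : ℕ) (k : ℤ) : ℕ :=
  if 0 ≤ k then gaussBinom q n k.toNat else 0

open Module Submodule

namespace SphereAux

lemma gb_zero_of_lt (q : ℕ) : ∀ {n k : ℕ}, n < k → gaussBinom q n k = 0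
  | 0, _+1, _ => rfl
  | n+1, k+1, h => by
      have h1 : n < k := by omega
      have h2 : n < k + 1 := by omega
      simp [gaussBinom, gb_zero_of_lt q h1, gb_zero_of_lt q h2]

lemma gb_diag (q n : ℕ) : gaussBinom q n n = 1 := by
  induction n with
  | zero => rfl
  | succ n ih => simp [gaussBinom, ih, gb_zero_of_lt q (Nat.lt_succ_self n)]

universe u v w

variable {Fq : Type u} [Field Fq] [Fintype Fq]

section Infra

variable {V : Type v} [AddCommGroup V] [Module Fq V] [FiniteDimensional Fq V]

instance : Finite (Submodule Fq V) := by
  haveI : Finite V := Module.finite_of_finite Fq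
  exact Finite.of_injective (fun W => (W : Set V)) SetLike.coe_injective

lemma card_hom (M : Type v) (N : Type w) [AddCommGroup M] [Module Fq M] [FiniteDimensional Fq M]
    [AddCommGroup N] [Module Fq N] [FiniteDimensional Fq N] :
    Nat.card (M →ₗ[Fq] N) = Fintype.card Fq ^ (finrank Fq M * finrank Fq N) := by
  classical
  rw [Nat.card_congr (LinearMap.toMatrix (Module.finBasis Fq M) (Module.finBasis Fq N)).toEquiv,
    Nat.card_congr (Matrix.of (m := Fin (finrank Fq N)) (n := Fin (finrank Fq M)) (α := Fq)).symm]
  haveI : Finite Fq := inferInstance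
  rw [Nat.card_fun, Nat.card_fun, Nat.card_eq_fintype_card (α := Fq), Nat.card_eq_fintype_card, Fintype.card_fin, Nat.card_eq_fintype_card, Fintype.card_fin, ← pow_mul, mul_comm]


lemma finrank_map_add {V₂ : Type w} [AddCommGroup V₂] [Module Fq V₂]
    (f : V →ₗ[Fq] V₂) (W : Submodule Fq V) :
    finrank Fq (W.map f) + finrank Fq (W ⊓ LinearMap.ker f : Submodule Fq V) = finrank Fq W := by
  have h := LinearMap.finrank_range_add_finrank_ker (f.domRestrict W)
  rw [LinearMap.range_domRestrict, LinearMap.ker_domRestrict] at h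
  have he : comap W.subtype (LinearMap.ker f) = comap W.subtype (W ⊓ LinearMap.ker f) := by
    ext x
    simp [x.2]
  rw [he, LinearEquiv.finrank_eq (comapSubtypeEquivOfLe (inf_le_left : W ⊓ LinearMap.ker f ≤ W))] at h
  exact h

lemma natCard_sigma_const {ι : Type v} [Finite ι] (f : ι → Type w) [∀ i, Finite (f i)]
    (c : ℕ) (h : ∀ i, Nat.card (f i) = c) :
    Nat.card ((i : ι) × f i) = Nat.card ι * c := by
  classical
  cases nonempty_fintype ι
  haveI : ∀ i, Fintype (f i) := fun i => Fintype.ofFinite _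
  rw [Nat.card_eq_fintype_card, Nat.card_eq_fintype_card, Fintype.card_sigma]
  have : ∀ i : ι, Fintype.card (f i) = c := fun i => by rw [← Nat.card_eq_fintype_card, h]
  simp [this, Finset.sum_const, mul_comm]

lemma card_split {α : Type v} [Finite α] (p q : α → Prop) :
    Nat.card {x : α // p x} =
      Nat.card {x : α // p x ∧ q x} + Nat.card {x : α // p x ∧ ¬ q x} := by
  classical
  rw [← Nat.card_sum]
  refine Nat.card_congr ?_
  exact ((Equiv.sumCompl (fun y : {x : α // p x} => q y.1)).symm.trans
    (Equiv.sumCongr (Equiv.subtypeSubtypeEquivSubtypeInter p q)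
      (Equiv.subtypeSubtypeEquivSubtypeInter p (fun x => ¬ q x))))


section Graph

variable (A C : Submodule Fq V) (h : IsCompl A C)

private noncomputable def pA : V →ₗ[Fq] ↥A := A.linearProjOfIsCompl C h
private noncomputable def pC : V →ₗ[Fq] ↥C := C.linearProjOfIsCompl A h.symm

omit [Fintype Fq] [FiniteDimensional Fq V] in
lemma proj_add (x : V) : (↑(pA A C h x) + ↑(pC A C h x) : V) = x :=
  Submodule.projection_add_projection_eq_self h x

omit [Fintype Fq] [FiniteDimensional Fq V] in
lemma pC_apply_A (a : ↥A) : pC A C h ↑a = 0 :=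
  Submodule.linearProjOfIsCompl_apply_right h.symm a

omit [Fintype Fq] [FiniteDimensional Fq V] in
lemma pC_apply_C (c : ↥C) : pC A C h ↑c = c :=
  Submodule.linearProjOfIsCompl_apply_left h.symm c

omit [Fintype Fq] [FiniteDimensional Fq V] in
lemma pA_apply_A (a : ↥A) : pA A C h ↑a = a :=
  Submodule.linearProjOfIsCompl_apply_left h a

omit [Fintype Fq] [FiniteDimensional Fq V] in
lemma pA_apply_C (c : ↥C) : pA A C h ↑c = 0 :=
  Submodule.linearProjOfIsCompl_apply_right h c

variable (W' : Submodule Fq ↥C)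

private noncomputable def gmap (φ : ↥W' →ₗ[Fq] ↥A) : ↥W' →ₗ[Fq] V :=
  ((C.subtype.comp W'.subtype) + (A.subtype.comp φ))

omit [Fintype Fq] [FiniteDimensional Fq V] in
lemma pC_gmap (φ : ↥W' →ₗ[Fq] ↥A) (w : ↥W') : pC A C h (gmap A C W' φ w) = ↑w := by
  simp [gmap, pC_apply_A A C h, pC_apply_C A C h]

omit [Fintype Fq] [FiniteDimensional Fq V] in
lemma pA_gmap (φ : ↥W' →ₗ[Fq] ↥A) (w : ↥W') : pA A C h (gmap A C W' φ w) = φ w := by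
  simp [gmap, pA_apply_A A C h, pA_apply_C A C h]

omit [Fintype Fq] [FiniteDimensional Fq V] in
include h in
lemma gmap_range_inf (φ : ↥W' →ₗ[Fq] ↥A) : LinearMap.range (gmap A C W' φ) ⊓ A = ⊥ := by
  rw [eq_bot_iff]
  rintro x ⟨⟨w, rfl⟩, hxA⟩
  have h1 : pC A C h (gmap A C W' φ w) = 0 := pC_apply_A A C h ⟨_, hxA⟩
  rw [pC_gmap A C h] at h1
  have : w = 0 := Subtype.ext h1
  subst this
  simp

omit [Fintype Fq] [FiniteDimensional Fq V] in
lemma gmap_range_map (φ : ↥W' →ₗ[Fq] ↥A) :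
    (LinearMap.range (gmap A C W' φ)).map (pC A C h) = W' := by
  ext c
  constructor
  · rintro ⟨x, ⟨w, rfl⟩, rfl⟩
    rw [pC_gmap A C h]
    exact w.2
  · intro hc
    exact ⟨gmap A C W' φ ⟨c, hc⟩, ⟨⟨c, hc⟩, rfl⟩, pC_gmap A C h W' φ ⟨c, hc⟩⟩

include h in
noncomputable def fiberMap (φ : ↥W' →ₗ[Fq] ↥A) :
    {W : Submodule Fq V // W ⊓ A = ⊥ ∧ W.map (pC A C h) = W'} :=
  ⟨LinearMap.range (gmap A C W' φ), gmap_range_inf A C h W' φ, gmap_range_map A C h W' φ⟩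

omit [Fintype Fq] [FiniteDimensional Fq V] in
lemma fiber_bij : Function.Bijective (fiberMap A C h W') := by
  constructor
  · intro φ ψ hfi
    have hr : LinearMap.range (gmap A C W' φ) = LinearMap.range (gmap A C W' ψ) :=
      congrArg Subtype.val hfi
    ext w
    have : gmap A C W' φ w ∈ LinearMap.range (gmap A C W' ψ) := by
      rw [← hr]; exact ⟨w, rfl⟩
    obtain ⟨w2, hw2⟩ := this
    have hc : (w2 : ↥C) = ↑w := by
      have := congrArg (pC A C h) hw2
      rwa [pC_gmap A C h, pC_gmap A C h] at this
    have ha := congrArg (pA A C h) hw2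
    rw [pA_gmap A C h, pA_gmap A C h] at ha
    rw [← ha, Subtype.ext hc]
  · rintro ⟨W, hWA, hWC⟩
    set f : ↥W →ₗ[Fq] ↥C := (pC A C h).comp W.subtype with hf
    have hinj : Function.Injective f := by
      rw [← LinearMap.ker_eq_bot, eq_bot_iff]
      rintro ⟨x, hxW⟩ hx
      have hx0 : pC A C h x = 0 := hx
      have hxA : x ∈ A := by
        have := proj_add A C h x
        rw [hx0] at this
        simp only [ZeroMemClass.coe_zero, add_zero] at this
        rw [← this]
        exact (pA A C h x).2
      have : x ∈ W ⊓ A := ⟨hxW, hxA⟩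
      rw [hWA] at this
      simp only [Submodule.mem_bot] at this ⊢
      exact Subtype.ext this
    have hr : LinearMap.range f = W' := by
      rw [hf, LinearMap.range_comp, Submodule.range_subtype, hWC]
    set e : ↥W ≃ₗ[Fq] ↥W' :=
      (LinearEquiv.ofInjective f hinj).trans (LinearEquiv.ofEq _ _ hr) with he
    refine ⟨((pA A C h).comp W.subtype).comp (e.symm : ↥W' →ₗ[Fq] ↥W), ?_⟩
    have key : ∀ y : ↥W', gmap A C W' (((pA A C h).comp W.subtype).comp
        (e.symm : ↥W' →ₗ[Fq] ↥W)) y = ↑(e.symm y) := by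
      intro y
      have hfy : f (e.symm y) = ↑y := by
        have h1 : e (e.symm y) = y := e.apply_symm_apply y
        have h2 : ((e (e.symm y) : ↥W') : ↥C) = (f (e.symm y) : ↥C) := rfl
        rw [h1] at h2
        exact h2.symm
      have h3 : (gmap A C W' (((pA A C h).comp W.subtype).comp
          (e.symm : ↥W' →ₗ[Fq] ↥W))) y = ↑(↑y : ↥C) + ↑((pA A C h) ↑(e.symm y)) := rfl
      rw [h3, ← hfy]
      have h4 : (↑(f (e.symm y)) : V) = ↑(pC A C h ↑(e.symm y)) := rfl
      rw [h4, add_comm]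
      exact proj_add A C h _
    apply Subtype.ext
    simp only [fiberMap]
    apply le_antisymm
    · rintro x ⟨y, rfl⟩
      rw [key y]
      exact (e.symm y).2
    · intro x hx
      exact ⟨e ⟨x, hx⟩, by rw [key, e.symm_apply_apply]⟩


include h in
lemma finrank_of_inf_bot {W : Submodule Fq V} (hW : W ⊓ A = ⊥) :
    finrank Fq (W.map (pC A C h)) = finrank Fq W := by
  have h1 := finrank_map_add (pC A C h) W
  have hker : LinearMap.ker (pC A C h) = A := Submodule.linearProjOfIsCompl_ker h.symm
  rw [hker, hW] at h1
  simpa using h1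

include h in
lemma graphCard (m : ℕ) :
    Nat.card {W : Submodule Fq V // finrank Fq W = m ∧ W ⊓ A = ⊥}
      = Fintype.card Fq ^ (finrank Fq A * m) *
        Nat.card {W' : Submodule Fq ↥C // finrank Fq W' = m} := by
  haveI : Finite V := Module.finite_of_finite Fq
  have E : {W : Submodule Fq V // finrank Fq W = m ∧ W ⊓ A = ⊥} ≃
      Σ W'' : {W' : Submodule Fq ↥C // finrank Fq W' = m},
        {W : Submodule Fq V // W ⊓ A = ⊥ ∧ W.map (pC A C h) = W''.1} :=
    { toFun := fun x => ⟨⟨x.1.map (pC A C h), by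
        rw [finrank_of_inf_bot A C h x.2.2]; exact x.2.1⟩, ⟨x.1, x.2.2, rfl⟩⟩
      invFun := fun x => ⟨x.2.1, by
        rw [← finrank_of_inf_bot A C h x.2.2.1, x.2.2.2]; exact x.1.2, x.2.2.1⟩
      left_inv := fun x => rfl
      right_inv := by
        rintro ⟨⟨W', hW'⟩, ⟨W, hWA, h2⟩⟩
        obtain rfl : W.map (pC A C h) = W' := h2
        rfl }
  rw [Nat.card_congr E]
  rw [natCard_sigma_const _ (Fintype.card Fq ^ (finrank Fq A * m)) ?_, mul_comm]
  intro W''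
  rw [← Nat.card_eq_of_bijective _ (fiber_bij A C h W''.1), card_hom (↥(W''.1)) (↥A),
    W''.2, mul_comm]

end Graph

end Infra


section Count

lemma card_dim_zero (V : Type v) [AddCommGroup V] [Module Fq V] [FiniteDimensional Fq V] :
    Nat.card {W : Submodule Fq V // finrank Fq W = 0} = 1 := by
  haveI : Unique {W : Submodule Fq V // finrank Fq W = 0} :=
    { default := ⟨⊥, finrank_bot Fq V⟩
      uniq := by
        rintro ⟨W, hW⟩
        exact Subtype.ext (Submodule.finrank_eq_zero.mp hW) }
  exact Nat.card_unique

lemma lemA : ∀ (n : ℕ) (V : Type v) [AddCommGroup V] [Module Fq V] [FiniteDimensional Fq V],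
    finrank Fq V = n → ∀ k, Nat.card {W : Submodule Fq V // finrank Fq W = k} =
      gaussBinom (Fintype.card Fq) n k := by
  intro n
  induction n with
  | zero =>
    intro V _ _ _ hV k
    match k with
    | 0 => rw [card_dim_zero]; rfl
    | k + 1 =>
      haveI : IsEmpty {W : Submodule Fq V // finrank Fq W = k + 1} := by
        constructor
        rintro ⟨W, hW⟩
        have := Submodule.finrank_le W
        omega
      rw [Nat.card_of_isEmpty]
      rfl
  | succ n ih =>
    intro V _ _ _ hV k
    haveI : Finite V := Module.finite_of_finite Fq
    match k with
    | 0 => rw [card_dim_zero]; rfl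
    | k + 1 =>
      have hpos : Nontrivial V := by
        rw [← Module.finrank_pos_iff (R := Fq)]
        omega
      obtain ⟨v, hv⟩ := exists_ne (0 : V)
      set L : Submodule Fq V := Fq ∙ v with hLdef
      have hL : finrank Fq L = 1 := finrank_span_singleton hv
      -- the iff between ¬ L ≤ W and W ⊓ L = ⊥
      have hiff : ∀ W : Submodule Fq V, (¬ L ≤ W) ↔ W ⊓ L = ⊥ := by
        intro W
        constructor
        · intro hn
          by_contra hne
          obtain ⟨x, hxm, hx0⟩ := Submodule.exists_mem_ne_zero_of_ne_bot hne
          obtain ⟨a, ha⟩ := Submodule.mem_span_singleton.mp hxm.2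
          have ha0 : a ≠ 0 := by rintro rfl; simp at ha; exact hx0 ha.symm
          have hvW : v ∈ W := by
            have : a⁻¹ • x ∈ W := W.smul_mem _ hxm.1
            rwa [← ha, smul_smul, inv_mul_cancel₀ ha0, one_smul] at this
          exact hn ((Submodule.span_singleton_le_iff_mem v W).mpr hvW)
        · intro hb hle
          rw [inf_eq_right.mpr hle, hLdef, Submodule.span_singleton_eq_bot] at hb
          exact hv hb
      -- split
      rw [card_split (fun W : Submodule Fq V => finrank Fq W = k + 1) (fun W => L ≤ W)]
      -- part 1
      have hquot : finrank Fq (V ⧸ L) = n := by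
        have := Submodule.finrank_quotient_add_finrank L
        omega
      have hLe : ∀ W' : Submodule Fq (V ⧸ L), L ≤ comap L.mkQ W' := by
        intro W' x hx
        have hx0 : L.mkQ x = 0 := by rwa [← LinearMap.mem_ker, Submodule.ker_mkQ]
        rw [Submodule.mem_comap, hx0]
        exact W'.zero_mem
      have part1 : Nat.card {W : Submodule Fq V // finrank Fq W = k + 1 ∧ L ≤ W}
          = gaussBinom (Fintype.card Fq) n k := by
        rw [← ih (V ⧸ L) hquot k]
        refine Nat.card_congr ?_
        refine { toFun := fun x => ⟨x.1.map L.mkQ, ?_⟩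
                 invFun := fun y => ⟨comap L.mkQ y.1, ?_, hLe y.1⟩
                 left_inv := ?_
                 right_inv := ?_ }
        · have h1 := finrank_map_add L.mkQ x.1
          rw [Submodule.ker_mkQ, inf_eq_right.mpr x.2.2, hL, x.2.1] at h1
          omega
        · have h1 := finrank_map_add L.mkQ (comap L.mkQ y.1)
          rw [Submodule.ker_mkQ, inf_eq_right.mpr (hLe y.1),
            Submodule.map_comap_eq_of_surjective (Submodule.mkQ_surjective L), hL, y.2] at h1
          omega
        · rintro ⟨W, h1, h2⟩
          refine Subtype.ext ?_
          show comap L.mkQ (map L.mkQ W) = W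
          rw [Submodule.comap_map_mkQ]
          exact sup_eq_right.mpr h2
        · rintro ⟨W', h1⟩
          refine Subtype.ext ?_
          show map L.mkQ (comap L.mkQ W') = W'
          exact Submodule.map_comap_eq_of_surjective (Submodule.mkQ_surjective L) W'
      -- part 2
      have part2 : Nat.card {W : Submodule Fq V // finrank Fq W = k + 1 ∧ ¬ L ≤ W}
          = Fintype.card Fq ^ (k + 1) * gaussBinom (Fintype.card Fq) n (k + 1) := by
        rw [Nat.card_congr (Equiv.subtypeEquivRight
          (fun W => and_congr_right fun _ => hiff W))]
        obtain ⟨Cc, hCc⟩ := Submodule.exists_isCompl L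
        have hCn : finrank Fq Cc = n := by
          have := Submodule.finrank_add_eq_of_isCompl hCc
          omega
        rw [graphCard L Cc hCc (k + 1), hL, one_mul, ih ↥Cc hCn (k + 1)]
      rw [part1, part2]
      rfl


lemma lemA' (V : Type v) [AddCommGroup V] [Module Fq V] [FiniteDimensional Fq V]
    {n d : ℕ} (hV : finrank Fq V = n) (hd : d ≤ n) :
    Nat.card {X : Submodule Fq V // finrank Fq X = d} =
      gaussBinom (Fintype.card Fq) n (n - d) := by
  have hdual : finrank Fq (Dual Fq V) = n := by rw [Subspace.dual_finrank_eq, hV]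
  have hann : ∀ X : Submodule Fq V, finrank Fq X.dualAnnihilator + finrank Fq X = n := by
    intro X
    have h1 := Submodule.finrank_quotient_add_finrank X.dualAnnihilator
    have h2 : finrank Fq (Dual Fq V ⧸ X.dualAnnihilator) = finrank Fq X := by
      rw [LinearEquiv.finrank_eq (Subspace.quotAnnihilatorEquiv X), Subspace.dual_finrank_eq]
    omega
  have hann' : ∀ Y : Submodule Fq (Dual Fq V),
      finrank Fq Y + finrank Fq Y.dualCoannihilator = n := by
    intro Y
    rw [Subspace.finrank_add_finrank_dualCoannihilator_eq Y, hV]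
  rw [← lemA n (Dual Fq V) hdual (n - d)]
  refine Nat.card_congr
    { toFun := fun X => ⟨X.1.dualAnnihilator, by have := hann X.1; have := X.2; omega⟩
      invFun := fun Y => ⟨Y.1.dualCoannihilator, by have := hann' Y.1; have := Y.2; omega⟩
      left_inv := fun X => Subtype.ext Subspace.dualAnnihilator_dualCoannihilator_eq
      right_inv := fun Y => Subtype.ext (Subspace.dualCoannihilator_dualAnnihilator_eq) }

lemma lemB (V : Type v) [AddCommGroup V] [Module Fq V] [FiniteDimensional Fq V]
    {n : ℕ} (hV : finrank Fq V = n) (A : Submodule Fq V) (m : ℕ) :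
    Nat.card {W : Submodule Fq V // finrank Fq W = m ∧ W ⊓ A = ⊥}
      = Fintype.card Fq ^ (finrank Fq A * m) *
        gaussBinom (Fintype.card Fq) (n - finrank Fq A) m := by
  obtain ⟨Cc, hCc⟩ := A.exists_isCompl
  have hC : finrank Fq Cc = n - finrank Fq A := by
    have := Submodule.finrank_add_eq_of_isCompl hCc
    omega
  rw [graphCard A Cc hCc m, lemA _ ↥Cc hC m]

lemma lemMain (V : Type v) [AddCommGroup V] [Module Fq V] [FiniteDimensional Fq V]
    {n nr d m : ℕ} (hV : finrank Fq V = n) (U : Submodule Fq V) (hU : finrank Fq U = nr)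
    (hd : d ≤ nr) (hdm : d ≤ m) :
    Nat.card {W : Submodule Fq V //
        finrank Fq W = m ∧ finrank Fq (U ⊓ W : Submodule Fq V) = d}
      = gaussBinom (Fintype.card Fq) nr (nr - d) *
        (Fintype.card Fq ^ ((nr - d) * (m - d)) *
          gaussBinom (Fintype.card Fq) (n - nr) (m - d)) := by
  haveI : Finite V := Module.finite_of_finite Fq
  have hnrn : nr ≤ n := by rw [← hV, ← hU]; exact Submodule.finrank_le U
  -- sigma decomposition over X = U ⊓ W
  have E : {W : Submodule Fq V //
        finrank Fq W = m ∧ finrank Fq (U ⊓ W : Submodule Fq V) = d} ≃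
      Σ X : {X : Submodule Fq V // X ≤ U ∧ finrank Fq X = d},
        {W : Submodule Fq V // finrank Fq W = m ∧ U ⊓ W = X.1} :=
    { toFun := fun x => ⟨⟨U ⊓ x.1, inf_le_left, x.2.2⟩, ⟨x.1, x.2.1, rfl⟩⟩
      invFun := fun x => ⟨x.2.1, x.2.2.1, by rw [x.2.2.2]; exact x.1.2.2⟩
      left_inv := fun x => rfl
      right_inv := by
        rintro ⟨⟨X, hXU, hXd⟩, ⟨W, hW, h2⟩⟩
        obtain rfl : U ⊓ W = X := h2
        rfl }
  rw [Nat.card_congr E]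
  -- index count
  have hidx : Nat.card {X : Submodule Fq V // X ≤ U ∧ finrank Fq X = d}
      = gaussBinom (Fintype.card Fq) nr (nr - d) := by
    rw [← lemA' ↥U hU hd]
    refine Nat.card_congr ?_
    refine { toFun := fun X => ⟨comap U.subtype X.1, ?_⟩
             invFun := fun X' => ⟨map U.subtype X'.1, Submodule.map_subtype_le U X'.1, ?_⟩
             left_inv := ?_
             right_inv := ?_ }
    · rw [LinearEquiv.finrank_eq (Submodule.comapSubtypeEquivOfLe X.2.1)]
      exact X.2.2
    · exact ((Submodule.equivMapOfInjective U.subtype U.injective_subtype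
        X'.1).finrank_eq).symm.trans X'.2
    · rintro ⟨X, hXU, hXd⟩
      refine Subtype.ext ?_
      show map U.subtype (comap U.subtype X) = X
      rw [Submodule.map_comap_subtype]
      exact inf_eq_right.mpr hXU
    · rintro ⟨X', hX'⟩
      refine Subtype.ext ?_
      show comap U.subtype (map U.subtype X') = X'
      exact Submodule.comap_map_eq_of_injective U.injective_subtype X'
  -- fiber count
  rw [natCard_sigma_const _ (Fintype.card Fq ^ ((nr - d) * (m - d)) *
      gaussBinom (Fintype.card Fq) (n - nr) (m - d)) ?_, hidx]
  rintro ⟨X, hXU, hXd⟩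
  -- pass to the quotient V ⧸ X
  have hXle : ∀ W' : Submodule Fq (V ⧸ X), X ≤ comap X.mkQ W' := by
    intro W' x hx
    have hx0 : X.mkQ x = 0 := by rwa [← LinearMap.mem_ker, Submodule.ker_mkQ]
    rw [Submodule.mem_comap, hx0]
    exact W'.zero_mem
  have hUbar : finrank Fq (U.map X.mkQ) = nr - d := by
    have h1 := finrank_map_add X.mkQ U
    rw [Submodule.ker_mkQ, inf_eq_right.mpr hXU, hXd, hU] at h1
    omega
  have hquot : finrank Fq (V ⧸ X) = n - d := by
    have h1 := Submodule.finrank_quotient_add_finrank X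
    rw [hXd, hV] at h1
    have := hnrn
    omega
  have Efib : {W : Submodule Fq V // finrank Fq W = m ∧ U ⊓ W = X} ≃
      {W' : Submodule Fq (V ⧸ X) // finrank Fq W' = m - d ∧ W' ⊓ (U.map X.mkQ) = ⊥} := by
    refine { toFun := fun x => ⟨x.1.map X.mkQ, ?_, ?_⟩
             invFun := fun y => ⟨comap X.mkQ y.1, ?_, ?_⟩
             left_inv := ?_
             right_inv := ?_ }
    · have h1 := finrank_map_add X.mkQ x.1
      have hXW : x.1 ⊓ X = X := inf_eq_right.mpr (x.2.2.symm.trans_le inf_le_right)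
      rw [Submodule.ker_mkQ, hXW, hXd, x.2.1] at h1
      omega
    · rw [eq_bot_iff]
      rintro y hy
      obtain ⟨hy1, hy2⟩ := hy
      obtain ⟨w, hw, rfl⟩ := Submodule.mem_map.mp hy1
      obtain ⟨uu, hu, huw⟩ := Submodule.mem_map.mp hy2
      have hwu : uu - w ∈ X := (Submodule.Quotient.eq X).mp huw
      have hwU : w ∈ U := by
        have : w = uu - (uu - w) := (sub_sub_cancel uu w).symm
        rw [this]
        exact U.sub_mem hu (hXU hwu)
      have : w ∈ U ⊓ x.1 := ⟨hwU, hw⟩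
      rw [x.2.2] at this
      have : X.mkQ w = 0 := by rwa [← LinearMap.mem_ker, Submodule.ker_mkQ]
      rw [this]
      exact Submodule.mem_bot _ |>.mpr rfl
    · have h1 := finrank_map_add X.mkQ (comap X.mkQ y.1)
      rw [Submodule.ker_mkQ, inf_eq_right.mpr (hXle y.1),
        Submodule.map_comap_eq_of_surjective (Submodule.mkQ_surjective X), hXd, y.2.1] at h1
      omega
    · refine le_antisymm ?_ (le_inf hXU (hXle y.1))
      rintro z ⟨hzU, hzW⟩
      have hz : X.mkQ z ∈ y.1 ⊓ (U.map X.mkQ) :=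
        ⟨hzW, Submodule.mem_map.mpr ⟨z, hzU, rfl⟩⟩
      rw [y.2.2] at hz
      rw [Submodule.mem_bot] at hz
      have hz2 : z ∈ LinearMap.ker X.mkQ := LinearMap.mem_ker.mpr hz
      rwa [Submodule.ker_mkQ] at hz2
    · rintro ⟨W, hm, hUW⟩
      refine Subtype.ext ?_
      show comap X.mkQ (map X.mkQ W) = W
      rw [Submodule.comap_map_mkQ]
      exact sup_eq_right.mpr (by rw [← hUW]; exact inf_le_right)
    · rintro ⟨W', h1, h2⟩
      refine Subtype.ext ?_
      show map X.mkQ (comap X.mkQ W') = W'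
      exact Submodule.map_comap_eq_of_surjective (Submodule.mkQ_surjective X) W'
  rw [Nat.card_congr Efib, lemB (V ⧸ X) hquot (U.map X.mkQ) (m - d), hUbar]
  have harith : n - d - (nr - d) = n - nr := by omega
  rw [harith]

end Count

end SphereAux

open SphereAux in
/-- The number of `nt`-dimensional subspaces of `F_q^N` at subspace distance
exactly `t` from a fixed `nr`-dimensional subspace `U` is
`q^{u(t-u)} [nr choose u]_q [N-nr choose t-u]_q` when `u = (nr-nt+t)/2` is a
nonnegative integer, and `0` when `nr - nt + t` is odd. -/
theorem sphere_size_subspace_metric {Fq : Type*} [Field Fq] [Fintype Fq]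
    (q : ℕ) (hq : q = Fintype.card Fq)
    (N nr nt t : ℕ) (hnr : nr ≤ N) (hnt : nt ≤ N)
    (U : Submodule Fq (Fin N → Fq)) (hU : Module.finrank Fq U = nr) :
    (∀ u : ℤ, 0 ≤ u → 2 * u = (nr : ℤ) - nt + t →
      (Nat.card {W : Submodule Fq (Fin N → Fq) //
          Module.finrank Fq W = nt ∧ sDist U W = t} : ℚ) =
        (q : ℚ) ^ (u * (t - u)) * (gaussBinomZ q nr u : ℚ) *
          (gaussBinomZ q (N - nr) ((t : ℤ) - u) : ℚ)) ∧
    (Odd ((nr : ℤ) - nt + t) →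
      Nat.card {W : Submodule Fq (Fin N → Fq) //
        Module.finrank Fq W = nt ∧ sDist U W = t} = 0) := by
  subst hq
  have hVN : finrank Fq (Fin N → Fq) = N := Module.finrank_fin_fun Fq
  have hfacts : ∀ W : Submodule Fq (Fin N → Fq), finrank Fq W = nt →
      finrank Fq (U ⊓ W : Submodule Fq (Fin N → Fq)) ≤ nr ∧
      finrank Fq (U ⊓ W : Submodule Fq (Fin N → Fq)) ≤ nt ∧
      sDist U W = nr + nt - 2 * finrank Fq (U ⊓ W : Submodule Fq (Fin N → Fq)) := by
    intro W hW
    refine ⟨hU ▸ Submodule.finrank_mono inf_le_left,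
      hW ▸ Submodule.finrank_mono inf_le_right, ?_⟩
    unfold sDist
    rw [hU, hW]
  constructor
  · intro u hu0 hu2
    have hu' : (u.toNat : ℤ) = u := Int.toNat_of_nonneg hu0
    by_cases hA : u ≤ (nr : ℤ) ∧ u ≤ (t : ℤ)
    · obtain ⟨hunr, hut⟩ := hA
      set d : ℕ := nr - u.toNat with hdd
      have hud : (d : ℤ) = nr - u := by omega
      have hpred : ∀ W : Submodule Fq (Fin N → Fq),
          (finrank Fq W = nt ∧ sDist U W = t) ↔
          (finrank Fq W = nt ∧ finrank Fq (U ⊓ W : Submodule Fq (Fin N → Fq)) = d) := by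
        intro W
        constructor
        · rintro ⟨hW, hs⟩
          obtain ⟨h1, h2, h3⟩ := hfacts W hW
          rw [h3] at hs
          exact ⟨hW, by omega⟩
        · rintro ⟨hW, hdw⟩
          obtain ⟨h1, h2, h3⟩ := hfacts W hW
          rw [h3, hdw]
          exact ⟨hW, by omega⟩
      rw [Nat.card_congr (Equiv.subtypeEquivRight hpred)]
      rw [lemMain (Fin N → Fq) hVN U hU (by omega : d ≤ nr) (by omega : d ≤ nt)]
      have h1 : nr - d = u.toNat := by omega
      have h2 : (t - u).toNat = nt - d := by omega
      have hexp : u * ((t : ℤ) - u) = (((nr - d) * (nt - d) : ℕ) : ℤ) := by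
        have h3 : ((nt - d : ℕ) : ℤ) = (t : ℤ) - u := by omega
        have h4 : ((nr - d : ℕ) : ℤ) = u := by omega
        rw [Nat.cast_mul, h3, h4]
      rw [gaussBinomZ, if_pos hu0, gaussBinomZ, if_pos (by omega : (0:ℤ) ≤ (t:ℤ) - u),
        ← h1, h2, hexp, zpow_natCast]
      push_cast
      ring
    · haveI hempty : IsEmpty {W : Submodule Fq (Fin N → Fq) //
          finrank Fq W = nt ∧ sDist U W = t} := by
        constructor
        rintro ⟨W, hW, hs⟩
        obtain ⟨h1, h2, h3⟩ := hfacts W hW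
        rw [h3] at hs
        exact hA (by constructor <;> omega)
      rw [Nat.card_of_isEmpty]
      rcases not_and_or.mp hA with h | h
      · have hz : gaussBinomZ (Fintype.card Fq) nr u = 0 := by
          rw [gaussBinomZ, if_pos hu0]
          exact gb_zero_of_lt _ (by omega)
        rw [hz]
        push_cast
        ring
      · have hz : gaussBinomZ (Fintype.card Fq) (N - nr) ((t : ℤ) - u) = 0 := by
          rw [gaussBinomZ, if_neg (by omega)]
        rw [hz]
        push_cast
        ring
  · intro hodd
    haveI hempty : IsEmpty {W : Submodule Fq (Fin N → Fq) //
        finrank Fq W = nt ∧ sDist U W = t} := by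
      constructor
      rintro ⟨W, hW, hs⟩
      obtain ⟨h1, h2, h3⟩ := hfacts W hW
      rw [h3] at hs
      obtain ⟨j, hj⟩ := hodd
      omega
    rw [Nat.card_of_isEmpty]
end

section
/- If γ + sδ ≤ (s(n_t(h-s+1) - (k-1)) - μ)/(h-s+1) and D = ceil((n_r(h-s+1) + s(k-1) + μ)/(s+1)) with n_r = n_t + γ - δ, then both D ≤ (n_t - δ)(h-s+1) and Ds ≥ γ(h-s+1) + s(k-1) + μ hold; in particular the interpolation solution space dimension satisfies d_I ≥ s(D-k+1) - γ(h-s+1) ≥ μ. -/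
/-- If `γ + sδ ≤ (s(nt(h-s+1) - (k-1)) - μ)/(h-s+1)` and
`D = ⌈(nr(h-s+1) + s(k-1) + μ)/(s+1)⌉` with `nr = nt + γ - δ`, then both
`D ≤ (nt - δ)(h-s+1)` and `Ds ≥ γ(h-s+1) + s(k-1) + μ` hold; in particular the
interpolation solution space dimension bound gives
`s(D-k+1) - γ(h-s+1) ≥ μ`. -/
theorem unique_decoding_radius (h nt k s μ γ δ nr D : ℕ)
    (hs : 1 ≤ s) (hsh : s ≤ h) (hk : 1 ≤ k) (hknt : k ≤ nt * (h - s + 1))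
    (hμ : 1 ≤ μ) (hδ : δ ≤ nt) (hnr : nr + δ = nt + γ)
    (hrad : (γ : ℚ) + s * δ ≤
      (s * ((nt : ℚ) * ((h : ℚ) - s + 1) - ((k : ℚ) - 1)) - μ) / ((h : ℚ) - s + 1))
    (hD : D = (nr * (h - s + 1) + s * (k - 1) + μ + s) / (s + 1)) :
    (D : ℤ) ≤ ((nt : ℤ) - δ) * ((h : ℤ) - s + 1) ∧
    (D : ℤ) * s ≥ γ * ((h : ℤ) - s + 1) + s * ((k : ℤ) - 1) + μ ∧
    (s : ℤ) * ((D : ℤ) - k + 1) - γ * ((h : ℤ) - s + 1) ≥ μ := by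
  set H := h - s + 1 with hHdef
  set K := k - 1 with hKdef
  have hH1 : 1 ≤ H := by omega
  have hHZ : ((H : ℤ)) = (h : ℤ) - s + 1 := by omega
  have hKZ : ((K : ℤ)) = (k : ℤ) - 1 := by omega
  have hHQ : ((H : ℚ)) = (h : ℚ) - s + 1 := by exact_mod_cast hHZ
  have hKQ : ((K : ℚ)) = (k : ℚ) - 1 := by exact_mod_cast hKZ
  have hposQ : (0 : ℚ) < (h : ℚ) - s + 1 := by
    rw [← hHQ]; exact_mod_cast hH1
  have hrad' : (γ : ℚ) * H + s * δ * H + s * K + μ ≤ s * nt * H := by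
    have h2 := (le_div_iff₀ hposQ).mp hrad
    rw [← hHQ, ← hKQ] at h2
    linarith [h2]
  have A : (γ : ℤ) * H + s * δ * H + s * K + μ ≤ s * nt * H := by
    exact_mod_cast hrad'
  have hspos : 0 < s + 1 := by omega
  have h1 : D * (s + 1) ≤ nr * H + s * K + μ + s := by
    rw [hD]; exact Nat.div_mul_le_self _ _
  have h2 : nr * H + s * K + μ + s < (D + 1) * (s + 1) := by
    have : (nr * H + s * K + μ + s) / (s + 1) < D + 1 := by omega
    exact (Nat.div_lt_iff_lt_mul hspos).mp this
  have B1 : ((D : ℤ)) * (s + 1) ≤ nr * H + s * K + μ + s := by exact_mod_cast h1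
  have B2 : ((nr : ℤ)) * H + s * K + μ + s < (D + 1) * (s + 1) := by exact_mod_cast h2
  have C : (nr : ℤ) = (nt : ℤ) + γ - δ := by omega
  rw [C] at B1 B2
  have hs1 : (0 : ℤ) < (s : ℤ) + 1 := by positivity
  have G1 : (D : ℤ) ≤ ((nt : ℤ) - δ) * H := by
    have key : ((s : ℤ) + 1) * D < ((s : ℤ) + 1) * (((nt : ℤ) - δ) * H + 1) := by
      linarith [A, B1]
    have := (mul_lt_mul_iff_right₀ hs1).mp key
    linarith
  have G2 : (D : ℤ) * s ≥ (γ : ℤ) * H + s * K + μ := by linarith [B2, G1]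
  refine ⟨?_, ?_, ?_⟩
  · rw [← hHZ]; exact G1
  · rw [← hHZ, ← hKZ]; exact G2
  · have : ((k : ℤ)) = (K : ℤ) + 1 := by omega
    rw [← hHZ, this]
    linarith [G2]
end

section
/- The vectors of the form (α^{jh}, f(α^{jh}), ..., f(α^{(j+1)h-1})) for j = 0, ..., n_t - 1 are linearly independent over F_q, so every codeword of FS[h; n_t, k] is an n_t-dimensional subspace; moreover any F_q-linear combination sum_j λ_j (α^{jh}, f(α^{jh}), ..., f(α^{(j+1)h-1})) equals (x, f(x), f(αx), ..., f(α^{h-1}x)) where x = sum_j λ_j α^{jh}. -/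
/-- The `j`-th generating vector
`(α^{jh}, f(α^{jh}), f(α^{jh+1}), …, f(α^{(j+1)h-1}))` of a codeword of the
folded subspace code, where `f` is the linearized polynomial with coefficients
`f l` (so `f(x) = ∑_l f_l x^{q^l}`). -/
noncomputable def fsVec {Fq Fqm : Type*} [Field Fq] [Field Fqm] [Algebra Fq Fqm]
    (q h k : ℕ) (α : Fqm) (f : Fin k → Fqm) (j : ℕ) : Fin (h + 1) → Fqm :=
  Fin.cons (α ^ (j * h))
    (fun i : Fin h => ∑ l : Fin k, f l * (α ^ (j * h + (i : ℕ))) ^ q ^ (l : ℕ))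

/-- The vectors `(α^{jh}, f(α^{jh}), …, f(α^{(j+1)h-1}))`, `j = 0, …, nt-1`, are
linearly independent over `F_q`, so every codeword of `FS[h; nt, k]` is an
`nt`-dimensional subspace; moreover any `F_q`-linear combination
`∑_j λ_j (α^{jh}, f(α^{jh}), …, f(α^{(j+1)h-1}))` equals
`(x, f(x), f(αx), …, f(α^{h-1}x))` with `x = ∑_j λ_j α^{jh}`. -/
theorem fs_codeword_dimension_and_combination {Fq Fqm : Type*}
    [Field Fq] [Fintype Fq] [Field Fqm] [Fintype Fqm] [Algebra Fq Fqm]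
    (q m : ℕ) (hq : q = Fintype.card Fq) (hm : Module.finrank Fq Fqm = m)
    (h nt k : ℕ) (hh : 1 ≤ h) (hnt : 1 ≤ nt) (hk : 1 ≤ k) (hhn : h * nt ≤ m)
    (α : Fqm) (hα : LinearIndependent Fq fun i : Fin m => α ^ (i : ℕ))
    (f : Fin k → Fqm) :
    LinearIndependent Fq (fun j : Fin nt => fsVec (Fq := Fq) q h k α f (j : ℕ)) ∧
    Module.finrank Fq
      (Submodule.span Fq (Set.range fun j : Fin nt => fsVec (Fq := Fq) q h k α f (j : ℕ))) = nt ∧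
    ∀ lam : Fin nt → Fq,
      ((∑ j : Fin nt, lam j • fsVec (Fq := Fq) q h k α f (j : ℕ)) 0 =
        ∑ j : Fin nt, lam j • α ^ ((j : ℕ) * h)) ∧
      ∀ i : Fin h,
        (∑ j : Fin nt, lam j • fsVec (Fq := Fq) q h k α f (j : ℕ)) i.succ =
          ∑ l : Fin k,
            f l * (α ^ (i : ℕ) * ∑ j : Fin nt, lam j • α ^ ((j : ℕ) * h)) ^ q ^ (l : ℕ) := by
  classical
  -- characteristic setup
  set p := ringChar Fq with hp
  haveI : CharP Fq p := ringChar.charP Fq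
  obtain ⟨s, hps, hcard⟩ := FiniteField.card Fq p
  haveI hfact : Fact p.Prime := ⟨hps⟩
  haveI : CharP Fqm p := charP_of_injective_algebraMap (algebraMap Fq Fqm).injective p
  -- key Frobenius linearity
  have key : ∀ (lam : Fin nt → Fq) (v : Fin nt → Fqm) (e : ℕ),
      (∑ j : Fin nt, lam j • v j) ^ q ^ e = ∑ j : Fin nt, lam j • (v j) ^ q ^ e := by
    intro lam v e
    have hqe : q ^ e = p ^ ((s : ℕ) * e) := by rw [hq, hcard, pow_mul]
    rw [hqe]
    conv_lhs => rw [← iterateFrobenius_def (R := Fqm) (p := p) (n := (s : ℕ) * e)]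
    rw [map_sum]
    refine Finset.sum_congr rfl fun j _ => ?_
    rw [iterateFrobenius_def, Algebra.smul_def, Algebra.smul_def, mul_pow, ← map_pow,
      ← hqe]
    rw [hq, FiniteField.pow_card_pow]
  -- linear independence
  have hlt : ∀ j : Fin nt, (j : ℕ) * h < m := by
    intro j
    calc (j : ℕ) * h < nt * h := (Nat.mul_lt_mul_right hh).mpr j.isLt
      _ = h * nt := Nat.mul_comm _ _
      _ ≤ m := hhn
  have hginj : Function.Injective (fun j : Fin nt => (⟨(j : ℕ) * h, hlt j⟩ : Fin m)) := by
    intro a b hab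
    have : (a : ℕ) * h = (b : ℕ) * h := congrArg Fin.val hab
    exact Fin.ext (Nat.eq_of_mul_eq_mul_right hh this)
  have hli0 : LinearIndependent Fq (fun j : Fin nt => α ^ ((j : ℕ) * h)) := by
    have := hα.comp _ hginj
    exact this
  have hli : LinearIndependent Fq (fun j : Fin nt => fsVec (Fq := Fq) q h k α f (j : ℕ)) := by
    apply LinearIndependent.of_comp (LinearMap.proj (0 : Fin (h + 1)))
    have : ((LinearMap.proj (0 : Fin (h + 1)) : (Fin (h + 1) → Fqm) →ₗ[Fq] Fqm) ∘
        fun j : Fin nt => fsVec (Fq := Fq) q h k α f (j : ℕ)) =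
        fun j : Fin nt => α ^ ((j : ℕ) * h) := by
      funext j
      simp [fsVec]
    rw [this]
    exact hli0
  refine ⟨hli, ?_, ?_⟩
  · rw [finrank_span_eq_card hli, Fintype.card_fin]
  · intro lam
    constructor
    · simp [fsVec, Finset.sum_apply]
    · intro i
      rw [Finset.sum_apply]
      have lhs_eq : ∀ j : Fin nt, (lam j • fsVec (Fq := Fq) q h k α f (j : ℕ)) i.succ =
          ∑ l : Fin k, lam j • (f l * (α ^ ((j : ℕ) * h + (i : ℕ))) ^ q ^ (l : ℕ)) := by
        intro j
        simp [fsVec, Finset.smul_sum]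
      simp only [lhs_eq]
      rw [Finset.sum_comm]
      refine Finset.sum_congr rfl fun l _ => ?_
      rw [mul_pow, key lam (fun j => α ^ ((j : ℕ) * h)) (l : ℕ), Finset.mul_sum, Finset.mul_sum]
      refine Finset.sum_congr rfl fun j _ => ?_
      rw [mul_smul_comm, mul_smul_comm, pow_add]
      congr 1
      ring
end
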